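/- Let A be an almost Kähler–Poisson algebra with curvature tensor R and bilinear form (X,Y) = X^i Y_i. Then for all X, Y, Z, V ∈ X(A): R(X,Y,Z,V) = −R(X,Y,V,Z) = −R(Y,X,Z,V) and R(X,Y,Z,V) = R(Z,V,X,Y), where R(X,Y,Z,V) = (R(Z,V)Y, X). -/

import Mathlib

open scoped BigOperators

namespace KPA

/-- The field of fractions of the polynomial ring `ℂ[x¹,…,xᵐ]`. -/
abbrev A (m : ℕ) := FractionRing (MvPolynomial (Fin m) ℂ)

/-- The generators `x^i` of `A m`. -/
noncomputable def Xg {m : ℕ} (i : Fin m) : A m :=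
  algebraMap (MvPolynomial (Fin m) ℂ) (A m) (MvPolynomial.X i)

/-- The image of a complex constant in `A m`. -/
noncomputable def cC {m : ℕ} (z : ℂ) : A m :=
  algebraMap (MvPolynomial (Fin m) ℂ) (A m) (MvPolynomial.C z)

/-- An almost Kähler–Poisson algebra: the field of fractions `A m` of `ℂ[x¹,…,xᵐ]`,
equipped with a ∗-structure `st` fixing the generators, a Poisson bracket `br`
compatible with ∗, and an invertible hermitian element `γ2` such that
`P^i_k P^k_l P^l_j = -γ² P^i_j` where `P^{ij} = {x^i, x^j}`. -/
structure AKP (m : ℕ) where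
  br : A m → A m → A m
  st : A m → A m
  br_add_left : ∀ a b c, br (a + b) c = br a c + br b c
  br_antisymm : ∀ a b, br a b = - br b a
  br_leibniz : ∀ a b c, br a (b * c) = br a b * c + b * br a c
  br_jacobi : ∀ a b c, br a (br b c) + br b (br c a) + br c (br a b) = 0
  br_const : ∀ (z : ℂ) (a : A m), br (cC z) a = 0
  st_add : ∀ a b, st (a + b) = st a + st b
  st_mul : ∀ a b, st (a * b) = st a * st b
  st_invol : ∀ a, st (st a) = a
  st_const : ∀ z : ℂ, st (cC z) = cC (starRingEnd ℂ z)
  st_x : ∀ i, st (Xg i) = Xg i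
  st_br : ∀ a b, st (br a b) = br (st a) (st b)
  γ2 : A m
  γ2_ne : γ2 ≠ 0
  γ2_herm : st γ2 = γ2
  akp : ∀ i j, (∑ k, ∑ l, br (Xg i) (Xg k) * br (Xg k) (Xg l) * br (Xg l) (Xg j))
      = - γ2 * br (Xg i) (Xg j)

namespace AKP

variable {m : ℕ} (S : AKP m)

/-- `P^{ij} = {x^i, x^j}`. -/
noncomputable def P (i j : Fin m) : A m := S.br (Xg i) (Xg j)

/-- `D^i(u) = γ^{-2} {u, x^k} P^i_k`. -/
noncomputable def D (u : A m) (i : Fin m) : A m := S.γ2⁻¹ * ∑ k, S.br u (Xg k) * S.P i k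

/-- `D^{ik} = D^i(x^k)`. -/
noncomputable def Dm (i k : Fin m) : A m := S.D (Xg k) i

/-- Membership in the tangent space `X(A) = {D(X) : X ∈ Der(A)}` (in components). -/
def tang (T : Fin m → A m) : Prop := ∃ V : Fin m → A m, ∀ i, T i = ∑ k, S.Dm i k * V k

/-- The tangent space `X(A)` as a submodule of `A^m` : the range of the projection `D`. -/
noncomputable def tSp : Submodule (A m) (Fin m → A m) :=
  LinearMap.range (Matrix.mulVecLin (Matrix.of fun i k => S.Dm i k))

/-- Action `X(u) = X^i D_i(u)` of a tangent vector on an element. -/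
noncomputable def act (X : Fin m → A m) (u : A m) : A m := ∑ i, X i * S.D u i

/-- The covariant derivative `∇_X Y = D^{ik} X^l D_l(Y_k) ∂_i` (in components). -/
noncomputable def nab (X Y : Fin m → A m) (i : Fin m) : A m :=
  ∑ k, S.Dm i k * ∑ l, X l * S.D (Y k) l

/-- The commutator `[X,Y]^i = X(Y^i) - Y(X^i)`. -/
noncomputable def lie (X Y : Fin m → A m) (i : Fin m) : A m := S.act X (Y i) - S.act Y (X i)

/-- The curvature `R(X,Y)Z = ∇_X ∇_Y Z - ∇_Y ∇_X Z - ∇_{[X,Y]} Z`. -/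
noncomputable def curv (X Y Z : Fin m → A m) (i : Fin m) : A m :=
  S.nab X (S.nab Y Z) i - S.nab Y (S.nab X Z) i - S.nab (S.lie X Y) Z i

/-- The bilinear form `(X,Y) = X^i Y_i`. -/
noncomputable def ipa (_S : AKP m) (X Y : Fin m → A m) : A m := ∑ i, X i * Y i

/-- `R(X,Y,Z,V) = (R(Z,V)Y, X)`. -/
noncomputable def Rq (X Y Z V : Fin m → A m) : A m := S.ipa (S.curv Z V Y) X

/-- `(∇_X R)(Y,Z,V)`, the covariant derivative of the curvature tensor. -/
noncomputable def nabR (X Y Z V : Fin m → A m) (i : Fin m) : A m :=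
  S.nab X (S.curv Y Z V) i - S.curv (S.nab X Y) Z V i
    - S.curv Y (S.nab X Z) V i - S.curv Y Z (S.nab X V) i

/-- `Π^{ij} = δ^{ij} - D^{ij}`. -/
noncomputable def Pim (i j : Fin m) : A m := (if i = j then 1 else 0) - S.Dm i j

/-- The positivity preorder: `a ≥ 0` iff `a = (∑ uᵢ* uᵢ)/(∑ vₖ* vₖ)`. -/
def pos (a : A m) : Prop :=
  ∃ (N N' : ℕ) (u : Fin N → A m) (v : Fin N' → A m),
    a = (∑ i, S.st (u i) * u i) / (∑ k, S.st (v k) * v k)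

end AKP
end KPA

namespace KPA
set_option synthInstance.maxHeartbeats 1000000
set_option maxHeartbeats 1000000

lemma deriv_ext {m : ℕ} (δ : A m → A m)
    (hadd : ∀ a b, δ (a + b) = δ a + δ b)
    (hmul : ∀ a b, δ (a * b) = δ a * b + a * δ b)
    (hC : ∀ z : ℂ, δ (cC z) = 0)
    (hX : ∀ i, δ (Xg i) = 0) : ∀ a, δ a = 0 := by
  have hpoly : ∀ p : MvPolynomial (Fin m) ℂ,
      δ (algebraMap (MvPolynomial (Fin m) ℂ) (A m) p) = 0 := by
    intro p
    induction p using MvPolynomial.induction_on with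
    | C z => exact hC z
    | add p q hp hq => rw [map_add, hadd, hp, hq, add_zero]
    | mul_X p i hp =>
        rw [map_mul, hmul, hp,
          show (algebraMap (MvPolynomial (Fin m) ℂ) (A m)) (MvPolynomial.X i) = Xg i from rfl,
          hX]
        ring
  intro a
  obtain ⟨⟨p, q⟩, hpq⟩ := IsLocalization.surj (nonZeroDivisors (MvPolynomial (Fin m) ℂ)) a
  have hq0 : (algebraMap (MvPolynomial (Fin m) ℂ) (A m)) q ≠ 0 :=
    IsFractionRing.to_map_ne_zero_of_mem_nonZeroDivisors q.2
  have h1 : δ a * algebraMap (MvPolynomial (Fin m) ℂ) (A m) (q : MvPolynomial (Fin m) ℂ) = 0 := by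
    have h2 := hmul a (algebraMap (MvPolynomial (Fin m) ℂ) (A m) (q : MvPolynomial (Fin m) ℂ))
    rw [hpq, hpoly, hpoly] at h2
    simpa using h2.symm
  exact (mul_eq_zero.mp h1).resolve_right hq0

namespace AKP

variable {m : ℕ} (S : AKP m)

lemma br_zero_left (a : A m) : S.br 0 a = 0 := by
  have h := S.br_add_left 0 0 a
  rw [add_zero] at h
  linear_combination -h

lemma br_zero_right (a : A m) : S.br a 0 = 0 := by
  rw [S.br_antisymm, S.br_zero_left, neg_zero]

lemma br_add_right (a b c : A m) : S.br a (b + c) = S.br a b + S.br a c := by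
  rw [S.br_antisymm a (b + c), S.br_add_left, S.br_antisymm a b, S.br_antisymm a c]; ring

lemma br_leibniz_left (a b c : A m) : S.br (a * b) c = S.br a c * b + a * S.br b c := by
  rw [S.br_antisymm (a * b) c, S.br_leibniz, S.br_antisymm a c, S.br_antisymm b c]; ring

lemma br_sum_left {ι : Type*} (s : Finset ι) (f : ι → A m) (c : A m) :
    S.br (∑ i ∈ s, f i) c = ∑ i ∈ s, S.br (f i) c := by
  classical
  induction s using Finset.induction_on with
  | empty => simpa using S.br_zero_left c
  | insert _ _ h ih => rw [Finset.sum_insert h, S.br_add_left, ih, Finset.sum_insert h]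

lemma br_sum_right {ι : Type*} (s : Finset ι) (f : ι → A m) (c : A m) :
    S.br c (∑ i ∈ s, f i) = ∑ i ∈ s, S.br c (f i) := by
  rw [S.br_antisymm, br_sum_left, ← Finset.sum_neg_distrib]
  exact Finset.sum_congr rfl fun i _ => (S.br_antisymm c (f i)).symm

lemma P_anti (i j : Fin m) : S.P i j = - S.P j i := S.br_antisymm _ _

lemma D_apply (u : A m) (i : Fin m) : S.D u i = S.γ2⁻¹ * ∑ k, S.br u (Xg k) * S.P i k := rfl

lemma D_add (u v : A m) (i : Fin m) : S.D (u + v) i = S.D u i + S.D v i := by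
  simp only [D, S.br_add_left, add_mul, Finset.sum_add_distrib, mul_add]

lemma D_mul (u v : A m) (i : Fin m) : S.D (u * v) i = S.D u i * v + u * S.D v i := by
  simp only [D]
  have h : ∀ k : Fin m, S.br (u * v) (Xg k) * S.P i k
      = (S.br u (Xg k) * S.P i k) * v + u * (S.br v (Xg k) * S.P i k) := fun k => by
    rw [S.br_leibniz_left]; ring
  rw [Finset.sum_congr rfl fun k _ => h k, Finset.sum_add_distrib, ← Finset.sum_mul,
    ← Finset.mul_sum]
  ring

lemma D_const (z : ℂ) (i : Fin m) : S.D (cC z) i = 0 := by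
  simp [D, S.br_const]

lemma D_sum {ι : Type*} (s : Finset ι) (f : ι → A m) (i : Fin m) :
    S.D (∑ j ∈ s, f j) i = ∑ j ∈ s, S.D (f j) i := by
  classical
  induction s using Finset.induction_on with
  | empty => simp [D, S.br_zero_left]
  | insert _ _ h ih => rw [Finset.sum_insert h, S.D_add, ih, Finset.sum_insert h]

lemma Dm_apply (i k : Fin m) : S.Dm i k = S.γ2⁻¹ * ∑ l, S.P k l * S.P i l := rfl

lemma Dm_symm (i j : Fin m) : S.Dm i j = S.Dm j i := by
  simp only [Dm_apply]
  congr 1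
  exact Finset.sum_congr rfl fun l _ => mul_comm _ _

/-- `K1 : Dm · P = P`. -/
lemma Dm_P (i j : Fin m) : ∑ l, S.Dm i l * S.P l j = S.P i j := by
  have h : ∀ l : Fin m, S.Dm i l * S.P l j
      = S.γ2⁻¹ * ∑ k, -(S.P i k * S.P k l * S.P l j) := fun l => by
    rw [Dm_apply, Finset.mul_sum, Finset.sum_mul, Finset.mul_sum]
    exact Finset.sum_congr rfl fun k _ => by
      rw [P_anti S l k]; ring
  rw [Finset.sum_congr rfl fun l _ => h l, ← Finset.mul_sum, Finset.sum_comm]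
  have h2 : ∑ k, ∑ l, -(S.P i k * S.P k l * S.P l j)
      = -∑ k, ∑ l, S.P i k * S.P k l * S.P l j := by
    simp [Finset.sum_neg_distrib]
  rw [h2, show (∑ k, ∑ l, S.P i k * S.P k l * S.P l j) = - S.γ2 * S.P i j from S.akp i j]
  field_simp [S.γ2_ne]

end AKP
end KPA


namespace KPA
namespace AKP
set_option synthInstance.maxHeartbeats 1000000
set_option maxHeartbeats 1000000

variable {m : ℕ} (S : AKP m)

lemma br_const_right (a : A m) (z : ℂ) : S.br a (cC z) = 0 := by
  rw [S.br_antisymm, S.br_const, neg_zero]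

/-- `K2 : Dm · h(v) = h(v)` where `h(v)ₗ = {v, xˡ}`. -/
lemma proj_br (v : A m) (i : Fin m) :
    ∑ l, S.Dm i l * S.br v (Xg l) = S.br v (Xg i) := by
  have key : ∀ v : A m, (∑ l, S.Dm i l * S.br v (Xg l)) - S.br v (Xg i) = 0 := by
    apply deriv_ext
    · intro a b
      simp only [S.br_add_left, mul_add, Finset.sum_add_distrib]; ring
    · intro a b
      have h1 : ∀ l : Fin m, S.Dm i l * (S.br a (Xg l) * b + a * S.br b (Xg l))
          = (S.Dm i l * S.br a (Xg l)) * b + a * (S.Dm i l * S.br b (Xg l)) := fun l => by ring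
      simp only [S.br_leibniz_left]
      rw [Finset.sum_congr rfl fun l _ => h1 l, Finset.sum_add_distrib, ← Finset.sum_mul,
        ← Finset.mul_sum]
      ring
    · intro z; simp [S.br_const]
    · intro a
      have h1 : ∀ l : Fin m, S.Dm i l * S.br (Xg a) (Xg l) = -(S.Dm i l * S.P l a) := fun l => by
        rw [show S.br (Xg a) (Xg l) = S.P a l from rfl, P_anti S a l]; ring
      rw [Finset.sum_congr rfl fun l _ => h1 l, Finset.sum_neg_distrib, S.Dm_P,
        show S.br (Xg a) (Xg i) = S.P a i from rfl, P_anti S a i]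
      ring
  exact sub_eq_zero.mp (key v)

/-- `K3 : act(h(v)) u = {v, u}`. -/
lemma ham_act (v u : A m) : ∑ i, S.br v (Xg i) * S.D u i = S.br v u := by
  have key : ∀ u : A m, (∑ i, S.br v (Xg i) * S.D u i) - S.br v u = 0 := by
    apply deriv_ext
    · intro a b
      simp only [S.D_add, S.br_add_right, mul_add, Finset.sum_add_distrib]; ring
    · intro a b
      have h1 : ∀ i : Fin m, S.br v (Xg i) * S.D (a * b) i
          = (S.br v (Xg i) * S.D a i) * b + a * (S.br v (Xg i) * S.D b i) := fun i => by
        rw [S.D_mul]; ring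
      rw [Finset.sum_congr rfl fun i _ => h1 i, Finset.sum_add_distrib, ← Finset.sum_mul,
        ← Finset.mul_sum, S.br_leibniz]
      ring
    · intro z; simp [S.D_const, S.br_const_right]
    · intro a
      have h1 : ∀ i : Fin m, S.br v (Xg i) * S.D (Xg a) i
          = S.Dm a i * S.br v (Xg i) := fun i => by
        rw [show S.D (Xg a) i = S.Dm i a from rfl, Dm_symm S i a]; ring
      rw [Finset.sum_congr rfl fun i _ => h1 i, S.proj_br]
      ring
  exact sub_eq_zero.mp (key u)

/-- `K4 : Dm · D(u) = D(u)`. -/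
lemma proj_D (u : A m) (i : Fin m) : ∑ k, S.Dm i k * S.D u k = S.D u i := by
  have h1 : ∀ k, S.Dm i k * S.D u k
      = ∑ a, S.γ2⁻¹ * S.br u (Xg a) * (S.Dm i k * S.P k a) := fun k => by
    rw [D_apply, Finset.mul_sum, Finset.mul_sum]
    exact Finset.sum_congr rfl fun a _ => by ring
  rw [Finset.sum_congr rfl fun k _ => h1 k, Finset.sum_comm]
  have h2 : ∀ a, ∑ k, S.γ2⁻¹ * S.br u (Xg a) * (S.Dm i k * S.P k a)
      = S.γ2⁻¹ * S.br u (Xg a) * S.P i a := fun a => by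
    rw [← Finset.mul_sum, S.Dm_P]
  rw [Finset.sum_congr rfl fun a _ => h2 a, D_apply, Finset.mul_sum]
  exact Finset.sum_congr rfl fun a _ => by ring

lemma Dm_idem (i j : Fin m) : ∑ k, S.Dm i k * S.Dm k j = S.Dm i j :=
  S.proj_D (Xg j) i

lemma proj_comb (W : Fin m → A m) (i : Fin m) :
    ∑ k, S.Dm i k * (∑ j, S.Dm k j * W j) = ∑ j, S.Dm i j * W j := by
  have h1 : ∀ k, S.Dm i k * ∑ j, S.Dm k j * W j
      = ∑ j, (S.Dm i k * S.Dm k j) * W j := fun k => by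
    rw [Finset.mul_sum]
    exact Finset.sum_congr rfl fun j _ => by ring
  rw [Finset.sum_congr rfl fun k _ => h1 k, Finset.sum_comm]
  exact Finset.sum_congr rfl fun j _ => by rw [← Finset.sum_mul, S.Dm_idem]

/-- A vector is "honestly tangent" if it is fixed by the projection `Dm`. -/
def Ht (T : Fin m → A m) : Prop := ∀ i, ∑ k, S.Dm i k * T k = T i

lemma tang_Ht {T : Fin m → A m} (h : S.tang T) : S.Ht T := by
  obtain ⟨V, hV⟩ := h
  intro i
  simp only [hV]
  exact S.proj_comb V i

lemma Ht_nab (X Y : Fin m → A m) : S.Ht (S.nab X Y) := by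
  intro i
  simp only [nab]
  exact S.proj_comb _ i

lemma Ht_add {X Y : Fin m → A m} (hX : S.Ht X) (hY : S.Ht Y) :
    S.Ht (fun k => X k + Y k) := by
  intro i
  simp only [mul_add, Finset.sum_add_distrib]
  rw [hX i, hY i]

lemma act_Xg {Z : Fin m → A m} (hZ : S.Ht Z) (a : Fin m) : S.act Z (Xg a) = Z a := by
  have h1 : ∀ i, Z i * S.D (Xg a) i = S.Dm a i * Z i := fun i => by
    rw [show S.D (Xg a) i = S.Dm i a from rfl, Dm_symm S i a]; ring
  rw [act, Finset.sum_congr rfl fun i _ => h1 i]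
  exact hZ a

lemma act_addu (Z : Fin m → A m) (u v : A m) :
    S.act Z (u + v) = S.act Z u + S.act Z v := by
  simp only [act, D_add, mul_add, Finset.sum_add_distrib]

lemma act_mulu (Z : Fin m → A m) (u v : A m) :
    S.act Z (u * v) = S.act Z u * v + u * S.act Z v := by
  simp only [act]
  have h1 : ∀ i, Z i * S.D (u * v) i
      = (Z i * S.D u i) * v + u * (Z i * S.D v i) := fun i => by rw [S.D_mul]; ring
  rw [Finset.sum_congr rfl fun i _ => h1 i, Finset.sum_add_distrib, ← Finset.sum_mul,
    ← Finset.mul_sum]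

lemma act_constu (Z : Fin m → A m) (z : ℂ) : S.act Z (cC z) = 0 := by
  simp [act, D_const]

lemma act_sumu {ι : Type*} (Z : Fin m → A m) (s : Finset ι) (f : ι → A m) :
    S.act Z (∑ j ∈ s, f j) = ∑ j ∈ s, S.act Z (f j) := by
  classical
  induction s using Finset.induction_on with
  | empty => simp [act, D, S.br_zero_left]
  | insert _ _ h ih => rw [Finset.sum_insert h, S.act_addu, ih, Finset.sum_insert h]

end AKP
end KPA


namespace KPA
namespace AKP
set_option synthInstance.maxHeartbeats 1000000
set_option maxHeartbeats 1000000

variable {m : ℕ} (S : AKP m)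

lemma D_zero (i : Fin m) : S.D 0 i = 0 := by
  simp [D, S.br_zero_left]

lemma act_zerou (Z : Fin m → A m) : S.act Z 0 = 0 := by
  simp [act, S.D_zero]

lemma br_neg_right (a b : A m) : S.br a (-b) = - S.br a b := by
  have h := S.br_add_right a b (-b)
  rw [show b + -b = (0 : A m) by ring, S.br_zero_right] at h
  exact (neg_eq_of_add_eq_zero_right h.symm).symm

/-- Hamiltonian coefficients of a tangent vector. -/
noncomputable def G (Z : Fin m → A m) (n : Fin m) : A m := -(S.γ2⁻¹) * ∑ k, Z k * S.P k n

lemma decomp {Z : Fin m → A m} (hZ : S.Ht Z) (i : Fin m) :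
    Z i = ∑ n, S.G Z n * S.P n i := by
  rw [← hZ i]
  have h1 : ∀ k, S.Dm i k * Z k = ∑ l, -(S.γ2⁻¹ * (Z k * S.P k l)) * S.P l i := fun k => by
    rw [Dm_apply, Finset.mul_sum, Finset.sum_mul]
    exact Finset.sum_congr rfl fun l _ => by rw [P_anti S i l]; ring
  rw [Finset.sum_congr rfl fun k _ => h1 k, Finset.sum_comm]
  refine Finset.sum_congr rfl fun l _ => ?_
  have h2 : ∑ k, -(S.γ2⁻¹ * (Z k * S.P k l)) = S.G Z l := by
    rw [G, Finset.mul_sum]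
    exact Finset.sum_congr rfl fun k _ => by ring
  rw [← Finset.sum_mul, h2]

lemma act_ht {Z : Fin m → A m} (hZ : S.Ht Z) (u : A m) :
    S.act Z u = ∑ n, S.G Z n * S.br (Xg n) u := by
  rw [act]
  have h1 : ∀ i, Z i * S.D u i = ∑ n, S.G Z n * (S.P n i * S.D u i) := fun i => by
    rw [show Z i = ∑ n, S.G Z n * S.P n i from S.decomp hZ i, Finset.sum_mul]
    exact Finset.sum_congr rfl fun n _ => by ring
  rw [Finset.sum_congr rfl fun i _ => h1 i, Finset.sum_comm]
  refine Finset.sum_congr rfl fun n _ => ?_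
  rw [← Finset.mul_sum]
  congr 1
  exact S.ham_act (Xg n) u

lemma jac3 (l n b : Fin m) :
    S.br (Xg l) (S.P b n) - S.br (Xg n) (S.P b l) = S.br (Xg b) (S.P l n) := by
  have h := S.br_jacobi (Xg l) (Xg b) (Xg n)
  have h1 : S.br (Xg b) (S.br (Xg n) (Xg l)) = - S.br (Xg b) (S.P l n) := by
    rw [show S.br (Xg n) (Xg l) = S.P n l from rfl, P_anti S n l, S.br_neg_right]
  have h2 : S.br (Xg n) (S.br (Xg l) (Xg b)) = - S.br (Xg n) (S.P b l) := by
    rw [show S.br (Xg l) (Xg b) = S.P l b from rfl, P_anti S l b, S.br_neg_right]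
  rw [h1, h2, show S.br (Xg b) (Xg n) = S.P b n from rfl] at h
  linear_combination h

lemma proj_br' (w : A m) (i : Fin m) :
    ∑ k, S.Dm i k * S.br (Xg k) w = S.br (Xg i) w := by
  have h1 : ∀ k, S.Dm i k * S.br (Xg k) w = -(S.Dm i k * S.br w (Xg k)) := fun k => by
    rw [S.br_antisymm (Xg k) w]; ring
  rw [Finset.sum_congr rfl fun k _ => h1 k, Finset.sum_neg_distrib, S.proj_br]
  exact (S.br_antisymm (Xg i) w).symm

/-- The integrability identity `(♣)`. -/
lemma clubs (i l n : Fin m) :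
    ∑ k, S.br (Xg l) (S.Dm i k) * S.P n k = ∑ k, S.br (Xg n) (S.Dm i k) * S.P l k := by
  have key : ∀ l' j : Fin m, ∑ k, S.br (Xg l') (S.Dm i k) * S.P k j
      = S.br (Xg l') (S.P i j) - ∑ k, S.Dm i k * S.br (Xg l') (S.P k j) := by
    intro l' j
    have h := congrArg (S.br (Xg l')) (S.Dm_P i j)
    rw [br_sum_right] at h
    have h2 : ∀ k, S.br (Xg l') (S.Dm i k * S.P k j)
        = S.br (Xg l') (S.Dm i k) * S.P k j + S.Dm i k * S.br (Xg l') (S.P k j) :=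
      fun k => S.br_leibniz _ _ _
    rw [Finset.sum_congr rfl fun k _ => h2 k, Finset.sum_add_distrib] at h
    exact eq_sub_of_add_eq h
  have flip : ∀ l' n' : Fin m, ∑ k, S.br (Xg l') (S.Dm i k) * S.P n' k
      = -(S.br (Xg l') (S.P i n')) + ∑ k, S.Dm i k * S.br (Xg l') (S.P k n') := by
    intro l' n'
    have h1 : ∀ k, S.br (Xg l') (S.Dm i k) * S.P n' k
        = -(S.br (Xg l') (S.Dm i k) * S.P k n') := fun k => by rw [P_anti S n' k]; ring
    rw [Finset.sum_congr rfl fun k _ => h1 k, Finset.sum_neg_distrib, key l' n']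
    ring
  rw [flip l n, flip n l]
  have hgoal : (∑ k, S.Dm i k * S.br (Xg l) (S.P k n))
      - ∑ k, S.Dm i k * S.br (Xg n) (S.P k l)
      = S.br (Xg l) (S.P i n) - S.br (Xg n) (S.P i l) := by
    rw [← Finset.sum_sub_distrib]
    have h1 : ∀ k, S.Dm i k * S.br (Xg l) (S.P k n) - S.Dm i k * S.br (Xg n) (S.P k l)
        = S.Dm i k * S.br (Xg k) (S.P l n) := fun k => by rw [← mul_sub, S.jac3 l n k]
    rw [Finset.sum_congr rfl fun k _ => h1 k, S.proj_br', ← S.jac3 l n i]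
  linear_combination hgoal

lemma act_defect (Z : Fin m → A m) {V : Fin m → A m} (hV : S.Ht V) (i : Fin m) :
    S.act Z (V i) - ∑ k, S.Dm i k * S.act Z (V k) = ∑ k, S.act Z (S.Dm i k) * V k := by
  have hexp : ∀ j, S.act Z (V j)
      = (∑ k, S.act Z (S.Dm j k) * V k) + ∑ k, S.Dm j k * S.act Z (V k) := by
    intro j
    conv_lhs => rw [← hV j]
    rw [S.act_sumu, ← Finset.sum_add_distrib]
    exact Finset.sum_congr rfl fun k _ => S.act_mulu _ _ _
  linear_combination hexp i

lemma diamond {Z V : Fin m → A m} (hZ : S.Ht Z) (hV : S.Ht V) (i : Fin m) :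
    ∑ k, S.act Z (S.Dm i k) * V k = ∑ k, S.act V (S.Dm i k) * Z k := by
  have e1 : ∀ k, S.act Z (S.Dm i k) * V k
      = ∑ l, ∑ n, (S.G Z l * S.G V n) * (S.br (Xg l) (S.Dm i k) * S.P n k) := fun k => by
    rw [S.act_ht hZ, S.decomp hV k, Finset.sum_mul_sum]
    exact Finset.sum_congr rfl fun l _ => Finset.sum_congr rfl fun n _ => by ring
  have e2 : ∀ k, S.act V (S.Dm i k) * Z k
      = ∑ l, ∑ n, (S.G Z l * S.G V n) * (S.br (Xg n) (S.Dm i k) * S.P l k) := fun k => by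
    rw [S.act_ht hV, S.decomp hZ k, Finset.sum_mul_sum, Finset.sum_comm]
    exact Finset.sum_congr rfl fun l _ => Finset.sum_congr rfl fun n _ => by ring
  have rot : ∀ F : Fin m → Fin m → Fin m → A m,
      ∑ k, ∑ l, ∑ n, F k l n = ∑ l, ∑ n, ∑ k, F k l n := fun F => by
    rw [Finset.sum_comm]
    exact Finset.sum_congr rfl fun l _ => Finset.sum_comm
  have hleft : ∑ k, S.act Z (S.Dm i k) * V k
      = ∑ l, ∑ n, ∑ k, (S.G Z l * S.G V n) * (S.br (Xg l) (S.Dm i k) * S.P n k) := by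
    rw [Finset.sum_congr rfl fun k _ => e1 k]
    exact rot _
  have hright : ∑ k, S.act V (S.Dm i k) * Z k
      = ∑ l, ∑ n, ∑ k, (S.G Z l * S.G V n) * (S.br (Xg n) (S.Dm i k) * S.P l k) := by
    rw [Finset.sum_congr rfl fun k _ => e2 k]
    exact rot _
  rw [hleft, hright]
  refine Finset.sum_congr rfl fun l _ => Finset.sum_congr rfl fun n _ => ?_
  rw [← Finset.mul_sum, ← Finset.mul_sum, S.clubs i l n]

lemma Ht_lie {Z V : Fin m → A m} (hZ : S.Ht Z) (hV : S.Ht V) : S.Ht (S.lie Z V) := by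
  intro i
  simp only [lie]
  have hd1 := S.act_defect Z hV i
  have hd2 := S.act_defect V hZ i
  have hdia := S.diamond hZ hV i
  have hsplit : ∑ k, S.Dm i k * (S.act Z (V k) - S.act V (Z k))
      = (∑ k, S.Dm i k * S.act Z (V k)) - ∑ k, S.Dm i k * S.act V (Z k) := by
    rw [← Finset.sum_sub_distrib]
    exact Finset.sum_congr rfl fun k _ => by ring
  rw [hsplit]
  linear_combination -hd1 + hd2 - hdia

lemma act_comm {Z V : Fin m → A m} (hZ : S.Ht Z) (hV : S.Ht V) (u : A m) :
    S.act Z (S.act V u) - S.act V (S.act Z u) = S.act (S.lie Z V) u := by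
  have key : ∀ u, (S.act Z (S.act V u) - S.act V (S.act Z u)) - S.act (S.lie Z V) u = 0 := by
    apply deriv_ext
    · intro a b
      simp only [S.act_addu]; ring
    · intro a b
      simp only [S.act_mulu, S.act_addu]; ring
    · intro z
      rw [S.act_constu, S.act_constu, S.act_constu, S.act_zerou, S.act_zerou]; ring
    · intro a
      rw [S.act_Xg hV, S.act_Xg hZ, S.act_Xg (S.Ht_lie hZ hV)]
      simp [lie]
  exact sub_eq_zero.mp (key u)

end AKP
end KPA


namespace KPA

lemma two_ne {m : ℕ} : (2 : A m) ≠ 0 := by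
  intro h
  have h1 : (algebraMap (MvPolynomial (Fin m) ℂ) (A m)) 2 = 0 := by
    rw [map_ofNat]; exact h
  have h2 : (2 : MvPolynomial (Fin m) ℂ) = 0 :=
    IsFractionRing.injective (MvPolynomial (Fin m) ℂ) (A m) (by rw [h1, map_zero])
  have h3 : (MvPolynomial.C (2 : ℂ) : MvPolynomial (Fin m) ℂ) = 0 := by
    rw [map_ofNat]; exact h2
  have h4 : (2 : ℂ) = 0 := MvPolynomial.C_injective (Fin m) ℂ (by rw [h3, map_zero])
  norm_num at h4

lemma two_eq_cC {m : ℕ} : (2 : A m) = cC 2 := by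
  rw [cC, show (MvPolynomial.C (2 : ℂ)) = (2 : MvPolynomial (Fin m) ℂ) from map_ofNat _ 2,
    map_ofNat]

namespace AKP
set_option synthInstance.maxHeartbeats 1000000
set_option maxHeartbeats 1000000

variable {m : ℕ} (S : AKP m)

lemma act_two (Z : Fin m → A m) (u : A m) : S.act Z (2 * u) = 2 * S.act Z u := by
  rw [S.act_mulu, two_eq_cC, S.act_constu]; ring

lemma ipa_comm (X Y : Fin m → A m) : S.ipa X Y = S.ipa Y X :=
  Finset.sum_congr rfl fun i _ => mul_comm _ _

lemma proj_pair {W : Fin m → A m} (hW : S.Ht W) (g : Fin m → A m) :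
    ∑ i, (∑ k, S.Dm i k * g k) * W i = ∑ k, g k * W k := by
  have h1 : ∀ i, (∑ k, S.Dm i k * g k) * W i = ∑ k, g k * (S.Dm i k * W i) := fun i => by
    rw [Finset.sum_mul]; exact Finset.sum_congr rfl fun k _ => by ring
  rw [Finset.sum_congr rfl fun i _ => h1 i, Finset.sum_comm]
  refine Finset.sum_congr rfl fun k _ => ?_
  rw [← Finset.mul_sum]
  congr 1
  have h2 : ∀ i : Fin m, S.Dm i k * W i = S.Dm k i * W i := fun i => by rw [Dm_symm S i k]
  rw [Finset.sum_congr rfl fun i _ => h2 i]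
  exact hW k

lemma metric (X : Fin m → A m) {Y W : Fin m → A m} (hY : S.Ht Y) (hW : S.Ht W) :
    S.act X (S.ipa Y W) = S.ipa (S.nab X Y) W + S.ipa Y (S.nab X W) := by
  have hL : S.act X (S.ipa Y W) = ∑ i, (S.act X (Y i) * W i + Y i * S.act X (W i)) := by
    rw [ipa, S.act_sumu]
    exact Finset.sum_congr rfl fun i _ => S.act_mulu _ _ _
  have h1 : S.ipa (S.nab X Y) W = ∑ k, S.act X (Y k) * W k := S.proj_pair hW _
  have h2 : S.ipa Y (S.nab X W) = ∑ k, Y k * S.act X (W k) := by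
    have h3 : ∀ i, Y i * S.nab X W i = S.nab X W i * Y i := fun i => mul_comm _ _
    rw [ipa, Finset.sum_congr rfl fun i _ => h3 i,
      show (∑ i, S.nab X W i * Y i) = ∑ k, S.act X (W k) * Y k from S.proj_pair hY _]
    exact Finset.sum_congr rfl fun k _ => mul_comm _ _
  rw [hL, h1, h2, ← Finset.sum_add_distrib]

lemma torsion {X Y : Fin m → A m} (hX : S.Ht X) (hY : S.Ht Y) (i : Fin m) :
    S.nab X Y i - S.nab Y X i = S.lie X Y i := by
  have h1 : S.nab X Y i - S.nab Y X i = ∑ k, S.Dm i k * S.lie X Y k := by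
    rw [nab, nab, ← Finset.sum_sub_distrib]
    refine Finset.sum_congr rfl fun k _ => ?_
    rw [← mul_sub]
    rfl
  rw [h1]
  exact S.Ht_lie hX hY i

lemma lie_anti (Z V : Fin m → A m) (i : Fin m) : S.lie Z V i = -(S.lie V Z i) := by
  simp only [lie]; ring

lemma nab_addY (X Y W : Fin m → A m) (i : Fin m) :
    S.nab X (fun k => Y k + W k) i = S.nab X Y i + S.nab X W i := by
  simp only [nab, D_add, mul_add, Finset.sum_add_distrib]

lemma curv_skew (Z V Y : Fin m → A m) (i : Fin m) : S.curv Z V Y i = -(S.curv V Z Y i) := by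
  rw [curv, curv]
  have h : S.nab (S.lie Z V) Y i = -(S.nab (S.lie V Z) Y i) := by
    have hl : ∀ l k : Fin m, S.lie Z V l * S.D (Y k) l
        = -(S.lie V Z l * S.D (Y k) l) := fun l k => by rw [S.lie_anti]; ring
    simp only [nab]
    rw [← Finset.sum_neg_distrib]
    refine Finset.sum_congr rfl fun k _ => ?_
    rw [Finset.sum_congr rfl fun l _ => hl l k, Finset.sum_neg_distrib]
    ring
  rw [h]; ring

lemma curv_addY (Z V X Y : Fin m → A m) (i : Fin m) :
    S.curv Z V (fun k => X k + Y k) i = S.curv Z V X i + S.curv Z V Y i := by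
  have h1 : S.nab V (fun k => X k + Y k) = fun j => S.nab V X j + S.nab V Y j :=
    funext (S.nab_addY V X Y)
  have h2 : S.nab Z (fun k => X k + Y k) = fun j => S.nab Z X j + S.nab Z Y j :=
    funext (S.nab_addY Z X Y)
  rw [curv, curv, curv, h1, h2, S.nab_addY Z (S.nab V X) (S.nab V Y),
    S.nab_addY V (S.nab Z X) (S.nab Z Y), S.nab_addY (S.lie Z V) X Y]
  ring

/-- `⟨R(Z,V)Y, Y⟩ = 0`. -/
lemma curv_self {Y Z V : Fin m → A m} (hY : S.Ht Y) (hZ : S.Ht Z) (hV : S.Ht V) :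
    S.ipa (S.curv Z V Y) Y = 0 := by
  have hnVY := S.Ht_nab V Y
  have hnZY := S.Ht_nab Z Y
  have e1 : S.ipa (S.nab Z (S.nab V Y)) Y
      = S.act Z (S.ipa (S.nab V Y) Y) - S.ipa (S.nab V Y) (S.nab Z Y) := by
    have h := S.metric Z hnVY hY
    linear_combination -h
  have e2 : S.ipa (S.nab V (S.nab Z Y)) Y
      = S.act V (S.ipa (S.nab Z Y) Y) - S.ipa (S.nab Z Y) (S.nab V Y) := by
    have h := S.metric V hnZY hY
    linear_combination -h
  have e3 : 2 * S.ipa (S.nab V Y) Y = S.act V (S.ipa Y Y) := by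
    have h := S.metric V hY hY
    have hc : S.ipa Y (S.nab V Y) = S.ipa (S.nab V Y) Y := S.ipa_comm _ _
    linear_combination -h - hc
  have e4 : 2 * S.ipa (S.nab Z Y) Y = S.act Z (S.ipa Y Y) := by
    have h := S.metric Z hY hY
    have hc : S.ipa Y (S.nab Z Y) = S.ipa (S.nab Z Y) Y := S.ipa_comm _ _
    linear_combination -h - hc
  have e5 : 2 * S.ipa (S.nab (S.lie Z V) Y) Y = S.act (S.lie Z V) (S.ipa Y Y) := by
    have h := S.metric (S.lie Z V) hY hY
    have hc : S.ipa Y (S.nab (S.lie Z V) Y) = S.ipa (S.nab (S.lie Z V) Y) Y := S.ipa_comm _ _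
    linear_combination -h - hc
  have u1 : 2 * S.act Z (S.ipa (S.nab V Y) Y) = S.act Z (S.act V (S.ipa Y Y)) := by
    rw [← S.act_two, e3]
  have u2 : 2 * S.act V (S.ipa (S.nab Z Y) Y) = S.act V (S.act Z (S.ipa Y Y)) := by
    rw [← S.act_two, e4]
  have ecomm := S.act_comm hZ hV (S.ipa Y Y)
  have hsym : S.ipa (S.nab V Y) (S.nab Z Y) = S.ipa (S.nab Z Y) (S.nab V Y) := S.ipa_comm _ _
  have esplit : S.ipa (S.curv Z V Y) Y
      = S.ipa (S.nab Z (S.nab V Y)) Y - S.ipa (S.nab V (S.nab Z Y)) Y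
        - S.ipa (S.nab (S.lie Z V) Y) Y := by
    rw [ipa, ipa, ipa, ipa, ← Finset.sum_sub_distrib, ← Finset.sum_sub_distrib]
    refine Finset.sum_congr rfl fun i _ => ?_
    rw [curv]; ring
  have key : 2 * S.ipa (S.curv Z V Y) Y = 0 := by
    linear_combination 2 * esplit + 2 * e1 - 2 * e2 - 2 * hsym + u1 - u2 - e5 + ecomm
  exact (mul_eq_zero.mp key).resolve_left two_ne

end AKP
end KPA


namespace KPA
namespace AKP
set_option synthInstance.maxHeartbeats 1000000
set_option maxHeartbeats 1000000

variable {m : ℕ} (S : AKP m)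

lemma br_neg_left (a b : A m) : S.br (-a) b = - S.br a b := by
  rw [S.br_antisymm (-a) b, S.br_neg_right, S.br_antisymm b a]; ring

lemma D_neg (u : A m) (i : Fin m) : S.D (-u) i = -(S.D u i) := by
  have h : ∀ k : Fin m, S.br (-u) (Xg k) * S.P i k = -(S.br u (Xg k) * S.P i k) := fun k => by
    rw [S.br_neg_left]; ring
  rw [D, Finset.sum_congr rfl fun k _ => h k, Finset.sum_neg_distrib, D]; ring

lemma D_sub (u v : A m) (i : Fin m) : S.D (u - v) i = S.D u i - S.D v i := by
  rw [sub_eq_add_neg, S.D_add, S.D_neg, ← sub_eq_add_neg]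

lemma act_negu (Z : Fin m → A m) (u : A m) : S.act Z (-u) = -(S.act Z u) := by
  have h : ∀ i : Fin m, Z i * S.D (-u) i = -(Z i * S.D u i) := fun i => by
    rw [S.D_neg]; ring
  rw [act, Finset.sum_congr rfl fun i _ => h i, Finset.sum_neg_distrib, act]

lemma act_subu (Z : Fin m → A m) (u v : A m) :
    S.act Z (u - v) = S.act Z u - S.act Z v := by
  rw [sub_eq_add_neg, S.act_addu, S.act_negu, ← sub_eq_add_neg]

lemma nab_subY (X Y W : Fin m → A m) (i : Fin m) :
    S.nab X (fun k => Y k - W k) i = S.nab X Y i - S.nab X W i := by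
  simp only [nab, D_sub, mul_sub, sub_mul, Finset.sum_sub_distrib]

lemma nab_congr (X : Fin m → A m) {W W' : Fin m → A m} (h : ∀ k, W k = W' k) (i : Fin m) :
    S.nab X W i = S.nab X W' i := by
  rw [funext h]

lemma lie_jacobi {X Y Z : Fin m → A m} (hX : S.Ht X) (hY : S.Ht Y) (hZ : S.Ht Z) (i : Fin m) :
    S.lie X (S.lie Y Z) i + S.lie Y (S.lie Z X) i + S.lie Z (S.lie X Y) i = 0 := by
  simp only [lie]
  rw [← S.act_comm hY hZ (X i), ← S.act_comm hZ hX (Y i), ← S.act_comm hX hY (Z i),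
    S.act_subu, S.act_subu, S.act_subu]
  ring

/-- The first Bianchi identity. -/
lemma bianchi {Y Z V : Fin m → A m} (hY : S.Ht Y) (hZ : S.Ht Z) (hV : S.Ht V) (i : Fin m) :
    S.curv Z V Y i + S.curv V Y Z i + S.curv Y Z V i = 0 := by
  have c1 : S.nab Z (S.nab V Y) i - S.nab Z (S.nab Y V) i = S.nab Z (S.lie V Y) i := by
    rw [← S.nab_subY]
    exact S.nab_congr Z (fun k => S.torsion hV hY k) i
  have c2 : S.nab V (S.nab Y Z) i - S.nab V (S.nab Z Y) i = S.nab V (S.lie Y Z) i := by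
    rw [← S.nab_subY]
    exact S.nab_congr V (fun k => S.torsion hY hZ k) i
  have c3 : S.nab Y (S.nab Z V) i - S.nab Y (S.nab V Z) i = S.nab Y (S.lie Z V) i := by
    rw [← S.nab_subY]
    exact S.nab_congr Y (fun k => S.torsion hZ hV k) i
  have d1 : S.nab Z (S.lie V Y) i - S.nab (S.lie V Y) Z i = S.lie Z (S.lie V Y) i :=
    S.torsion hZ (S.Ht_lie hV hY) i
  have d2 : S.nab V (S.lie Y Z) i - S.nab (S.lie Y Z) V i = S.lie V (S.lie Y Z) i :=
    S.torsion hV (S.Ht_lie hY hZ) i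
  have d3 : S.nab Y (S.lie Z V) i - S.nab (S.lie Z V) Y i = S.lie Y (S.lie Z V) i :=
    S.torsion hY (S.Ht_lie hZ hV) i
  have j := S.lie_jacobi hZ hV hY i
  simp only [curv]
  linear_combination c1 + c2 + c3 + d1 + d2 + d3 + j

lemma bianchiR {Y Z V : Fin m → A m} (hY : S.Ht Y) (hZ : S.Ht Z) (hV : S.Ht V)
    (X : Fin m → A m) :
    S.ipa (S.curv Z V Y) X + S.ipa (S.curv V Y Z) X + S.ipa (S.curv Y Z V) X = 0 := by
  have h1 : ∀ i, S.curv Z V Y i * X i + S.curv V Y Z i * X i + S.curv Y Z V i * X i = 0 :=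
    fun i => by linear_combination X i * S.bianchi hY hZ hV i
  rw [ipa, ipa, ipa, ← Finset.sum_add_distrib, ← Finset.sum_add_distrib,
    Finset.sum_congr rfl fun i _ => h1 i, Finset.sum_const_zero]

/-- Antisymmetry in the last two slots (no tangency needed). -/
lemma ipa_curv_skew (a b c d : Fin m → A m) :
    S.ipa (S.curv c d b) a = -(S.ipa (S.curv d c b) a) := by
  rw [ipa, ipa, ← Finset.sum_neg_distrib]
  exact Finset.sum_congr rfl fun i _ => by rw [S.curv_skew c d b i]; ring

/-- Antisymmetry in the first two slots. -/
lemma skewXY {X Y Z V : Fin m → A m} (hX : S.Ht X) (hY : S.Ht Y) (hZ : S.Ht Z)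
    (hV : S.Ht V) : S.ipa (S.curv Z V Y) X = -(S.ipa (S.curv Z V X) Y) := by
  have hXY := S.Ht_add hX hY
  have h0 := S.curv_self hXY hZ hV
  have hx := S.curv_self hX hZ hV
  have hy := S.curv_self hY hZ hV
  have e : S.ipa (S.curv Z V (fun k => X k + Y k)) (fun k => X k + Y k)
      = ∑ i, (S.curv Z V X i + S.curv Z V Y i) * (X i + Y i) := by
    rw [ipa]
    refine Finset.sum_congr rfl fun i _ => ?_
    rw [S.curv_addY]
  have h1 : ∀ i, (S.curv Z V X i + S.curv Z V Y i) * (X i + Y i)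
      = (S.curv Z V X i * X i + S.curv Z V X i * Y i)
        + (S.curv Z V Y i * X i + S.curv Z V Y i * Y i) := fun i => by ring
  rw [e, Finset.sum_congr rfl fun i _ => h1 i, Finset.sum_add_distrib,
    Finset.sum_add_distrib, Finset.sum_add_distrib] at h0
  have h2 : S.ipa (S.curv Z V X) X + S.ipa (S.curv Z V X) Y
      + (S.ipa (S.curv Z V Y) X + S.ipa (S.curv Z V Y) Y) = 0 := h0
  rw [hx, hy] at h2
  linear_combination h2

/-- The pair symmetry `R(a,b,c,d) = R(c,d,a,b)`. -/
lemma pair_sym {a b c d : Fin m → A m} (ha : S.Ht a) (hb : S.Ht b) (hc : S.Ht c)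
    (hd : S.Ht d) : S.ipa (S.curv c d b) a = S.ipa (S.curv a b d) c := by
  have B1 := S.bianchiR hc hd hb a
  have B2 := S.bianchiR hd hb ha c
  have B3 := S.bianchiR hb ha hc d
  have B4 := S.bianchiR ha hc hd b
  have as1 := S.skewXY hc ha hd hb
  have as2 := S.skewXY hb hd ha hc
  have as3 := S.skewXY hd ha hc hb
  have as3' := S.ipa_curv_skew a d c b
  have as4 := S.skewXY hb hc hd ha
  have as4' := S.ipa_curv_skew c b d a
  have as5 := S.ipa_curv_skew c d b a
  have as6 := S.skewXY hd hc hb ha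
  have as7 := S.skewXY hb ha hc hd
  have key : 2 * (S.ipa (S.curv c d b) a - S.ipa (S.curv a b d) c) = 0 := by
    linear_combination B1 + B2 - B3 - B4 - as1 + as3 - as3' + as2 + as4 - as4'
      + as7 + as6 - 2 * as5
  have h := (mul_eq_zero.mp key).resolve_left two_ne
  linear_combination h

end AKP
end KPA


/-- The symmetries of the curvature tensor of an almost
Kähler–Poisson algebra: `R(X,Y,Z,V) = −R(X,Y,V,Z) = −R(Y,X,Z,V)` and
`R(X,Y,Z,V) = R(Z,V,X,Y)`, where `R(X,Y,Z,V) = (R(Z,V)Y, X)`. -/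
theorem statement_16 {m : ℕ} (S : KPA.AKP m) (X Y Z V : Fin m → KPA.A m)
    (hX : S.tang X) (hY : S.tang Y) (hZ : S.tang Z) (hV : S.tang V) :
    S.Rq X Y Z V = - S.Rq X Y V Z ∧
    S.Rq X Y Z V = - S.Rq Y X Z V ∧
    S.Rq X Y Z V = S.Rq Z V X Y := by
  have hX' := S.tang_Ht hX
  have hY' := S.tang_Ht hY
  have hZ' := S.tang_Ht hZ
  have hV' := S.tang_Ht hV
  refine ⟨?_, ?_, ?_⟩
  · show S.ipa (S.curv Z V Y) X = -(S.ipa (S.curv V Z Y) X)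
    exact S.ipa_curv_skew X Y Z V
  · show S.ipa (S.curv Z V Y) X = -(S.ipa (S.curv Z V X) Y)
    exact S.skewXY hX' hY' hZ' hV'
  · show S.ipa (S.curv Z V Y) X = S.ipa (S.curv X Y V) Z
    exact S.pair_sym hX' hY' hZ' hV'
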